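/- Let α ≠ 0 and let H be the two-parameter group acting on ℝ³ by (s,t)·v = (e^s(cos(αs) v₁ − sin(αs) v₂), e^s(sin(αs) v₁ + cos(αs) v₂), e^t v₃). Let 𝒪₂ = {v ∈ ℝ³ : v₁² + v₂² ≠ 0 and v₃ ≠ 0}. Then Σ = {v ∈ ℝ³ : v₁² + v₂² = 1 and |v₃| = 1} is a topological section for the action of H on 𝒪₂; since Σ is compact, the orbit space 𝒪₂/H is compact. -/

import Mathlib

open Set Topology
open scoped Real

noncomputable section

/-- The action of `(s,t) ∈ ℝ²` on `ℝ³`: rotation-dilation `e^s·R(αs)` in the first two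
coordinates and dilation `e^t` in the third. -/
def act (α : ℝ) (p : ℝ × ℝ) (v : Fin 3 → ℝ) : Fin 3 → ℝ :=
  ![Real.exp p.1 * (Real.cos (α * p.1) * v 0 - Real.sin (α * p.1) * v 1),
    Real.exp p.1 * (Real.sin (α * p.1) * v 0 + Real.cos (α * p.1) * v 1),
    Real.exp p.2 * v 2]

/-- `𝒪₂ = {v ∈ ℝ³ : v₁² + v₂² ≠ 0 and v₃ ≠ 0}`. -/
def O2 : Set (Fin 3 → ℝ) := {v | v 0 ^ 2 + v 1 ^ 2 ≠ 0 ∧ v 2 ≠ 0}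

/-- `Σ = {v ∈ ℝ³ : v₁² + v₂² = 1 and |v₃| = 1}`. -/
def Sec : Set (Fin 3 → ℝ) := {v | v 0 ^ 2 + v 1 ^ 2 = 1 ∧ |v 2| = 1}

/-- The orbit equivalence relation on `𝒪₂`; `Quot (orbitRel α)` is the orbit space
`𝒪₂/H` with the quotient topology. -/
def orbitRel (α : ℝ) (x y : ↥O2) : Prop :=
  ∃ p : ℝ × ℝ, act α p (x : Fin 3 → ℝ) = (y : Fin 3 → ℝ)

lemma act_add (α : ℝ) (p q : ℝ × ℝ) (v : Fin 3 → ℝ) :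
    act α p (act α q v) = act α (p + q) v := by
  funext i
  fin_cases i <;>
    simp [act, Real.exp_add, mul_add, Real.cos_add, Real.sin_add] <;> ring

lemma act_zero (α : ℝ) (v : Fin 3 → ℝ) : act α 0 v = v := by
  funext i
  fin_cases i <;> simp [act]

lemma act_norm2 (α : ℝ) (p : ℝ × ℝ) (v : Fin 3 → ℝ) :
    (act α p v 0) ^ 2 + (act α p v 1) ^ 2 = Real.exp p.1 ^ 2 * (v 0 ^ 2 + v 1 ^ 2) := by
  have h := Real.sin_sq_add_cos_sq (α * p.1)
  simp only [act]
  simp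
  nlinarith [h]

lemma act_two (α : ℝ) (p : ℝ × ℝ) (v : Fin 3 → ℝ) :
    act α p v 2 = Real.exp p.2 * v 2 := by
  simp [act]

/-- The "coordinates" of a point of `O2`. -/
def sFun (v : Fin 3 → ℝ) : ℝ := Real.log (Real.sqrt (v 0 ^ 2 + v 1 ^ 2))

def tFun (v : Fin 3 → ℝ) : ℝ := Real.log |v 2|

lemma sum_sq_pos {v : Fin 3 → ℝ} (hv : v ∈ O2) : 0 < v 0 ^ 2 + v 1 ^ 2 :=
  lt_of_le_of_ne (by positivity) (Ne.symm hv.1)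

lemma exp_sFun {v : Fin 3 → ℝ} (hv : v ∈ O2) :
    Real.exp (sFun v) = Real.sqrt (v 0 ^ 2 + v 1 ^ 2) :=
  Real.exp_log (Real.sqrt_pos.2 (sum_sq_pos hv))

lemma exp_tFun {v : Fin 3 → ℝ} (hv : v ∈ O2) :
    Real.exp (tFun v) = |v 2| :=
  Real.exp_log (abs_pos.2 hv.2)

lemma act_neg_mem_Sec {v : Fin 3 → ℝ} (α : ℝ) (hv : v ∈ O2) :
    act α (-sFun v, -tFun v) v ∈ Sec := by
  constructor
  · rw [act_norm2]
    have h1 : Real.exp (-sFun v, -tFun v).1 = (Real.sqrt (v 0 ^ 2 + v 1 ^ 2))⁻¹ := by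
      simp [Real.exp_neg, exp_sFun hv]
    rw [h1, inv_pow, Real.sq_sqrt (sum_sq_pos hv).le]
    field_simp
    exact div_self (sum_sq_pos hv).ne'
  · rw [act_two]
    have h2 : Real.exp (-sFun v, -tFun v).2 = |v 2|⁻¹ := by
      simp [Real.exp_neg, exp_tFun hv]
    rw [h2, abs_mul, abs_inv, abs_abs]
    field_simp [hv.2]

lemma act_mem_O2 {c : Fin 3 → ℝ} (α : ℝ) (p : ℝ × ℝ) (hc : c ∈ Sec) :
    act α p c ∈ O2 := by
  constructor
  · rw [act_norm2, hc.1, mul_one]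
    positivity
  · rw [act_two]
    have : c 2 ≠ 0 := by
      intro h
      have h2 := hc.2
      rw [h] at h2; simp at h2
    positivity

lemma continuous_act (α : ℝ) : Continuous fun q : (ℝ × ℝ) × (Fin 3 → ℝ) => act α q.1 q.2 := by
  apply continuous_pi
  intro i
  fin_cases i <;> simp only [act] <;> simp <;> fun_prop

/-- The equivalence `(ℝ × ℝ) × Sec ≃ O2`. -/
def secEquiv (α : ℝ) : ((ℝ × ℝ) × ↥Sec) ≃ ↥O2 where
  toFun q := ⟨act α q.1 (q.2 : Fin 3 → ℝ), act_mem_O2 α q.1 q.2.2⟩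
  invFun v := ((sFun (v : Fin 3 → ℝ), tFun (v : Fin 3 → ℝ)),
    ⟨act α (-sFun (v : Fin 3 → ℝ), -tFun (v : Fin 3 → ℝ)) (v : Fin 3 → ℝ), act_neg_mem_Sec α v.2⟩)
  left_inv := by
    rintro ⟨⟨s, t⟩, c, hc⟩
    have hs : sFun (act α (s, t) c) = s := by
      unfold sFun
      rw [show (act α (s,t) c 0)^2 + (act α (s,t) c 1)^2
            = Real.exp (s,t).1 ^ 2 * (c 0 ^2 + c 1 ^2) from act_norm2 α (s,t) c,
        hc.1, mul_one, Real.sqrt_sq (Real.exp_pos s).le, Real.log_exp]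
    have ht : tFun (act α (s, t) c) = t := by
      unfold tFun
      rw [act_two, abs_mul, hc.2, mul_one, abs_of_pos (Real.exp_pos t), Real.log_exp]
    ext1
    · simp [hs, ht]
    · apply Subtype.ext
      simp only [hs, ht]
      rw [act_add]
      simp [act_zero]
      exact act_zero α _
  right_inv := by
    rintro ⟨v, hv⟩
    apply Subtype.ext
    simp only
    rw [act_add]
    simp [act_zero]
    exact act_zero α _

lemma isCompact_Sec : IsCompact Sec := by
  have hsub : Sec ⊆ Set.pi Set.univ (fun _ : Fin 3 => Icc (-1 : ℝ) 1) := by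
    rintro v ⟨h1, h2⟩ i _
    have h0 : v 0 ^ 2 ≤ 1 := by nlinarith [sq_nonneg (v 1)]
    have h1' : v 1 ^ 2 ≤ 1 := by nlinarith [sq_nonneg (v 0)]
    have habs : ∀ x : ℝ, x ^ 2 ≤ 1 → x ∈ Icc (-1 : ℝ) 1 := by
      intro x hx
      constructor <;> nlinarith
    fin_cases i
    · exact habs _ h0
    · exact habs _ h1'
    · have := abs_le.1 h2.le
      exact ⟨this.1, this.2⟩
  have hclosed : IsClosed Sec := by
    have : Sec = (fun v : Fin 3 → ℝ => v 0 ^ 2 + v 1 ^ 2) ⁻¹' {1} ∩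
        (fun v : Fin 3 → ℝ => |v 2|) ⁻¹' {1} := by
      ext v; simp [Sec]
    rw [this]
    exact ((isClosed_singleton.preimage (by fun_prop)).inter
      (isClosed_singleton.preimage (by fun_prop)))
  exact (isCompact_univ_pi fun _ => isCompact_Icc).of_isClosed_subset hclosed hsub

set_option maxHeartbeats 1000000 in
/-- The homeomorphism. -/
def secHomeo (α : ℝ) : ((ℝ × ℝ) × ↥Sec) ≃ₜ ↥O2 where
  toEquiv := secEquiv α
  continuous_toFun :=
    Continuous.subtype_mk ((continuous_act α).comp
      (continuous_fst.prodMk (continuous_subtype_val.comp continuous_snd))) _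
  continuous_invFun := by
    have hval : Continuous fun v : ↥O2 => (v : Fin 3 → ℝ) := continuous_subtype_val
    have hs : Continuous fun v : ↥O2 => sFun (v : Fin 3 → ℝ) := by
      rw [continuous_iff_continuousAt]
      intro v
      apply ContinuousAt.comp
      · apply Real.continuousAt_log
        exact (Real.sqrt_pos.2 (sum_sq_pos v.2)).ne'
      · have : Continuous fun v : ↥O2 =>
            Real.sqrt ((v : Fin 3 → ℝ) 0 ^ 2 + (v : Fin 3 → ℝ) 1 ^ 2) :=
          Real.continuous_sqrt.comp
            ((((continuous_apply 0).comp continuous_subtype_val).pow 2).add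
              (((continuous_apply 1).comp continuous_subtype_val).pow 2))
        exact this.continuousAt
    have ht : Continuous fun v : ↥O2 => tFun (v : Fin 3 → ℝ) := by
      rw [continuous_iff_continuousAt]
      intro v
      apply ContinuousAt.comp
      · exact Real.continuousAt_log (abs_ne_zero.2 v.2.2)
      · have : Continuous fun v : ↥O2 => |(v : Fin 3 → ℝ) 2| :=
          ((continuous_apply 2).comp continuous_subtype_val).abs
        exact this.continuousAt
    exact Continuous.prodMk (hs.prodMk ht) (Continuous.subtype_mk
      ((continuous_act α).comp (((hs.neg.prodMk ht.neg)).prodMk hval)) _)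

/-- For `α ≠ 0`, the compact set `Σ` is a topological section for the
action of `H` on `𝒪₂`, and consequently the orbit space `𝒪₂/H` is compact. -/
theorem section_compact_case_3a (α : ℝ) (hα : α ≠ 0) :
    Sec ⊆ O2 ∧
    (∃ e : ((ℝ × ℝ) × ↥Sec) ≃ₜ ↥O2,
      ∀ (p : ℝ × ℝ) (c : ↥Sec), ((e (p, c) : ↥O2) : Fin 3 → ℝ) = act α p (c : Fin 3 → ℝ)) ∧
    IsCompact Sec ∧
    CompactSpace (Quot (orbitRel α)) := by
  have hSecO2 : Sec ⊆ O2 := by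
    intro v hv
    constructor
    · rw [hv.1]; exact one_ne_zero
    · intro h
      have h2 := hv.2
      rw [h] at h2; simp at h2
  refine ⟨hSecO2, ⟨secHomeo α, fun p c => rfl⟩, isCompact_Sec, ?_⟩
  -- compactness of the quotient
  haveI : CompactSpace ↥Sec := isCompact_iff_compactSpace.1 isCompact_Sec
  set f : ↥Sec → Quot (orbitRel α) :=
    fun c => Quot.mk _ (⟨(c : Fin 3 → ℝ), hSecO2 c.2⟩ : ↥O2)
  have hfc : Continuous f :=
    (continuous_quot_mk).comp (Continuous.subtype_mk continuous_subtype_val _)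
  have hfs : Function.Surjective f := by
    intro q
    obtain ⟨v, rfl⟩ := Quot.exists_rep q
    obtain ⟨⟨p, c⟩, hpc⟩ := (secHomeo α).surjective v
    refine ⟨c, ?_⟩
    apply Quot.sound
    exact ⟨p, by rw [← hpc]; rfl⟩
  constructor
  rw [← hfs.range_eq, ← Set.image_univ]
  exact isCompact_univ.image hfc
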